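/- arXiv:2206.00754 — 6 statements merged into one kernel-verified Lean document; each statement's English description precedes it below -/
import Mathlib

section
/- Let (x_m) and (y_m) be sequences of non-negative integers with x_m < y_m for all m and y_m → ∞, and let (e_m), (g_m) be sequences of non-negative reals with R_m = Σ_{v = x_m+1}^{y_m} e_v · g_{y_m − v} > 0 for all m. Let (Y_n) be a sequence of random variables and y ∈ ℝ a constant. If (Y_n) is deferred Nörlund statistically convergent in probability to the constant y, then (Y_n²) is deferred Nörlund statistically convergent in probability to y². -/
open MeasureTheory Filter

/-- The deferred Nörlund normalizing sum `R_m = ∑_{v=x_m+1}^{y_m} e_v g_{y_m - v}`. -/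
noncomputable def Rm (x y : ℕ → ℕ) (e g : ℕ → ℝ) (m : ℕ) : ℝ :=
  ∑ v ∈ Finset.Ioc (x m) (y m), e v * g (y m - v)

/-- The family of sets `{n : n ≤ R_m and A m n}` has deferred Nörlund density zero. -/
def DNZero (x y : ℕ → ℕ) (e g : ℕ → ℝ) (A : ℕ → ℕ → Prop) : Prop :=
  Tendsto
    (fun m => (Nat.card {n : ℕ | (n : ℝ) ≤ Rm x y e g m ∧ A m n} : ℝ) / Rm x y e g m)
    atTop (nhds 0)

/-- Deferred Nörlund statistical convergence in probability of `(Y n)` to `Z`. -/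
def StDNP {Ω : Type*} [MeasurableSpace Ω] (μ : Measure Ω)
    (x y : ℕ → ℕ) (e g : ℕ → ℝ) (Y : ℕ → Ω → ℝ) (Z : Ω → ℝ) : Prop :=
  ∀ ε > (0 : ℝ), ∀ δ > (0 : ℝ),
    DNZero x y e g
      (fun m n => δ ≤ e (y m - n) * g n * (μ {ω | ε ≤ |Y n ω - Z ω|}).toReal)

lemma dnzero_mono (x y : ℕ → ℕ) (e g : ℕ → ℝ) (hR : ∀ m, 0 < Rm x y e g m)
    {A B : ℕ → ℕ → Prop} (h : ∀ m n, A m n → B m n)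
    (hB : DNZero x y e g B) : DNZero x y e g A := by
  apply squeeze_zero (g := fun m =>
      (Nat.card {n : ℕ | (n : ℝ) ≤ Rm x y e g m ∧ B m n} : ℝ) / Rm x y e g m)
    (fun m => div_nonneg (Nat.cast_nonneg _) (hR m).le) _ hB
  intro m
  have hfin : {n : ℕ | (n : ℝ) ≤ Rm x y e g m ∧ B m n}.Finite := by
    apply (Set.finite_Iic (⌊Rm x y e g m⌋₊)).subset
    intro n hn
    exact Nat.le_floor hn.1
  have hsub : {n : ℕ | (n : ℝ) ≤ Rm x y e g m ∧ A m n} ⊆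
      {n : ℕ | (n : ℝ) ≤ Rm x y e g m ∧ B m n} :=
    fun n hn => ⟨hn.1, h m n hn.2⟩
  have := Nat.card_mono hfin hsub
  apply div_le_div_of_nonneg_right (by exact_mod_cast this) (hR m).le

/-- If `(Y n)` is St_DNP-convergent to the constant `c`, then
`(Y n ^ 2)` is St_DNP-convergent to `c ^ 2`. -/
theorem stmt_1 {Ω : Type*} [MeasurableSpace Ω] (μ : Measure Ω) [IsProbabilityMeasure μ]
    (x y : ℕ → ℕ) (e g : ℕ → ℝ)
    (hxy : ∀ m, x m < y m) (hy : Tendsto y atTop atTop)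
    (he : ∀ m, 0 ≤ e m) (hg : ∀ m, 0 ≤ g m)
    (hR : ∀ m, 0 < Rm x y e g m)
    (Y : ℕ → Ω → ℝ) (c : ℝ)
    (hYmeas : ∀ n, Measurable (Y n))
    (hY : StDNP μ x y e g Y (fun _ => c)) :
    StDNP μ x y e g (fun n ω => (Y n ω) ^ 2) (fun _ => c ^ 2) := by
  intro ε hε δ hδ
  set t : ℝ := min 1 (ε / (1 + 2 * |c|)) with ht
  have h2c : (0:ℝ) < 1 + 2 * |c| := by positivity
  have htpos : 0 < t := lt_min one_pos (div_pos hε h2c)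
  have ht1 : t ≤ 1 := min_le_left _ _
  have htε : t * (1 + 2 * |c|) ≤ ε := by
    have := min_le_right 1 (ε / (1 + 2 * |c|))
    calc t * (1 + 2 * |c|) ≤ (ε / (1 + 2 * |c|)) * (1 + 2 * |c|) := by
          apply mul_le_mul_of_nonneg_right this h2c.le
      _ = ε := div_mul_cancel₀ _ h2c.ne'
  apply dnzero_mono x y e g hR _ (hY t htpos δ hδ)
  intro m n hn
  refine le_trans hn ?_
  apply mul_le_mul_of_nonneg_left _ (mul_nonneg (he _) (hg _))
  have hsub : {ω | ε ≤ |Y n ω ^ 2 - c ^ 2|} ⊆ {ω | t ≤ |Y n ω - c|} := by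
    intro ω hω
    by_contra hlt
    simp only [Set.mem_setOf_eq, not_le] at hlt
    simp only [Set.mem_setOf_eq] at hω
    have h1 : |Y n ω ^ 2 - c ^ 2| = |Y n ω - c| * |Y n ω + c| := by
      rw [← abs_mul]; ring_nf
    have h2 : |Y n ω + c| ≤ |Y n ω - c| + 2 * |c| := by
      have : Y n ω + c = (Y n ω - c) + 2 * c := by ring
      rw [this]
      calc |(Y n ω - c) + 2 * c| ≤ |Y n ω - c| + |2 * c| := abs_add_le _ _
        _ = |Y n ω - c| + 2 * |c| := by rw [abs_mul]; norm_num
    have habs : 0 ≤ |Y n ω - c| := abs_nonneg _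
    nlinarith [abs_nonneg (Y n ω + c)]
  have hmono : μ {ω | ε ≤ |Y n ω ^ 2 - c ^ 2|} ≤ μ {ω | t ≤ |Y n ω - c|} :=
    measure_mono hsub
  exact ENNReal.toReal_mono (measure_ne_top μ _) hmono
end

section
/- Let (x_m) and (y_m) be sequences of non-negative integers with x_m < y_m for all m and y_m → ∞, and let (e_m), (g_m) be sequences of non-negative reals with R_m = Σ_{v = x_m+1}^{y_m} e_v · g_{y_m − v} > 0 for all m. Let (Y_n) and (Z_n) be sequences of random variables on the same probability space and y, z ∈ ℝ constants. If (Y_n) is deferred Nörlund statistically convergent in probability to the constant y and (Z_n) is deferred Nörlund statistically convergent in probability to the constant z, then the sequence (Y_n · Z_n) is deferred Nörlund statistically convergent in probability to y·z. -/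
open MeasureTheory Filter

lemma finite_aux (r : ℝ) (A : ℕ → Prop) : {n : ℕ | (n : ℝ) ≤ r ∧ A n}.Finite :=
  (Set.finite_Iic ⌊r⌋₊).subset fun n hn => Nat.le_floor hn.1

lemma DNZero.mono {x y : ℕ → ℕ} {e g : ℕ → ℝ} {A B : ℕ → ℕ → Prop}
    (hR : ∀ m, 0 < Rm x y e g m) (h : ∀ m n, A m n → B m n) (hB : DNZero x y e g B) :
    DNZero x y e g A := by
  refine squeeze_zero (fun m => div_nonneg (by positivity) (hR m).le) (fun m => ?_) hB
  refine div_le_div_of_nonneg_right ?_ (hR m).le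
  exact_mod_cast Nat.card_mono (finite_aux _ _) fun n (hn : _ ∧ _) => ⟨hn.1, h m n hn.2⟩

lemma DNZero.union {x y : ℕ → ℕ} {e g : ℕ → ℝ} {A B : ℕ → ℕ → Prop}
    (hR : ∀ m, 0 < Rm x y e g m) (hA : DNZero x y e g A) (hB : DNZero x y e g B) :
    DNZero x y e g (fun m n => A m n ∨ B m n) := by
  have h0 : Tendsto (fun m => (Nat.card {n : ℕ | (n : ℝ) ≤ Rm x y e g m ∧ A m n} : ℝ) / Rm x y e g m
      + (Nat.card {n : ℕ | (n : ℝ) ≤ Rm x y e g m ∧ B m n} : ℝ) / Rm x y e g m) atTop (nhds 0) := by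
    simpa using hA.add hB
  refine squeeze_zero (fun m => div_nonneg (by positivity) (hR m).le) (fun m => ?_) h0
  rw [← add_div]
  refine div_le_div_of_nonneg_right ?_ (hR m).le
  have : {n : ℕ | (n : ℝ) ≤ Rm x y e g m ∧ (A m n ∨ B m n)} ⊆
        {n : ℕ | (n : ℝ) ≤ Rm x y e g m ∧ A m n} ∪ {n : ℕ | (n : ℝ) ≤ Rm x y e g m ∧ B m n} := by
    rintro n ⟨h1, h2 | h2⟩
    · exact Or.inl ⟨h1, h2⟩
    · exact Or.inr ⟨h1, h2⟩
  calc (Nat.card {n : ℕ | (n : ℝ) ≤ Rm x y e g m ∧ (A m n ∨ B m n)} : ℝ)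
      ≤ Nat.card ({n : ℕ | (n : ℝ) ≤ Rm x y e g m ∧ A m n} ∪ {n : ℕ | (n : ℝ) ≤ Rm x y e g m ∧ B m n} : Set ℕ) := by
        exact_mod_cast Nat.card_mono ((finite_aux _ _).union (finite_aux _ _)) this
    _ ≤ _ := by
        push_cast [Nat.card_coe_set_eq]
        exact_mod_cast Set.ncard_union_le _ _

/-- If `(Y n)` is St_DNP-convergent to the constant `c` and `(Z n)` is
St_DNP-convergent to the constant `d`, then `(Y n * Z n)` is St_DNP-convergent to `c * d`. -/
theorem stmt_2 {Ω : Type*} [MeasurableSpace Ω] (μ : Measure Ω) [IsProbabilityMeasure μ]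
    (x y : ℕ → ℕ) (e g : ℕ → ℝ)
    (hxy : ∀ m, x m < y m) (hy : Tendsto y atTop atTop)
    (he : ∀ m, 0 ≤ e m) (hg : ∀ m, 0 ≤ g m)
    (hR : ∀ m, 0 < Rm x y e g m)
    (Y Z : ℕ → Ω → ℝ) (c d : ℝ)
    (hYmeas : ∀ n, Measurable (Y n)) (hZmeas : ∀ n, Measurable (Z n))
    (hY : StDNP μ x y e g Y (fun _ => c))
    (hZ : StDNP μ x y e g Z (fun _ => d)) :
    StDNP μ x y e g (fun n ω => Y n ω * Z n ω) (fun _ => c * d) := by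
  intro ε hε δ hδ
  set ε₁ := Real.sqrt (ε / 3) with hε₁def
  have hε₁ : 0 < ε₁ := Real.sqrt_pos.2 (by linarith)
  have hε₁sq : ε₁ * ε₁ = ε / 3 := Real.mul_self_sqrt (by linarith)
  set ε₂ := ε / (3 * (|c| + 1)) with hε₂def
  set ε₃ := ε / (3 * (|d| + 1)) with hε₃def
  have hc1 : (0:ℝ) < 3 * (|c| + 1) := by positivity
  have hd1 : (0:ℝ) < 3 * (|d| + 1) := by positivity
  have hε₂ : 0 < ε₂ := by positivity
  have hε₃ : 0 < ε₃ := by positivity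
  have he2 : ε₂ * (3 * (|c| + 1)) = ε := div_mul_cancel₀ _ hc1.ne'
  have he3 : ε₃ * (3 * (|d| + 1)) = ε := div_mul_cancel₀ _ hd1.ne'
  -- measure bound
  have key : ∀ n, (μ {ω | ε ≤ |Y n ω * Z n ω - c * d|}).toReal ≤
      (μ {ω | ε₁ ≤ |Y n ω - c|}).toReal + (μ {ω | ε₁ ≤ |Z n ω - d|}).toReal
      + (μ {ω | ε₂ ≤ |Z n ω - d|}).toReal + (μ {ω | ε₃ ≤ |Y n ω - c|}).toReal := by
    intro n
    have hsub : {ω | ε ≤ |Y n ω * Z n ω - c * d|} ⊆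
        {ω | ε₁ ≤ |Y n ω - c|} ∪ {ω | ε₁ ≤ |Z n ω - d|}
        ∪ {ω | ε₂ ≤ |Z n ω - d|} ∪ {ω | ε₃ ≤ |Y n ω - c|} := by
      intro ω hω
      simp only [Set.mem_union, Set.mem_setOf_eq] at hω ⊢
      by_contra hcon
      push_neg at hcon
      obtain ⟨⟨⟨h1, h2⟩, h3⟩, h4⟩ := hcon
      have ha : (0:ℝ) ≤ |Y n ω - c| := abs_nonneg _
      have hb : (0:ℝ) ≤ |Z n ω - d| := abs_nonneg _
      have htri : |Y n ω * Z n ω - c * d| ≤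
          |Y n ω - c| * |Z n ω - d| + |c| * |Z n ω - d| + |d| * |Y n ω - c| := by
        have : Y n ω * Z n ω - c * d = (Y n ω - c) * (Z n ω - d) + c * (Z n ω - d)
            + d * (Y n ω - c) := by ring
        rw [this]
        calc |(Y n ω - c) * (Z n ω - d) + c * (Z n ω - d) + d * (Y n ω - c)|
            ≤ |(Y n ω - c) * (Z n ω - d) + c * (Z n ω - d)| + |d * (Y n ω - c)| :=
              abs_add_le _ _
          _ ≤ |(Y n ω - c) * (Z n ω - d)| + |c * (Z n ω - d)| + |d * (Y n ω - c)| := by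
              linarith [abs_add_le ((Y n ω - c) * (Z n ω - d)) (c * (Z n ω - d))]
          _ = _ := by rw [abs_mul, abs_mul, abs_mul]
      have hab : |Y n ω - c| * |Z n ω - d| < ε / 3 := by
        calc |Y n ω - c| * |Z n ω - d| < ε₁ * ε₁ := by
              rcases eq_or_lt_of_le ha with h | h
              · rw [← h]; simpa [← h] using mul_pos hε₁ hε₁
              · exact mul_lt_mul'' h1 h2 ha hb
          _ = ε / 3 := hε₁sq
      have hcb : |c| * |Z n ω - d| ≤ ε / 3 := by
        have : |c| * |Z n ω - d| ≤ |c| * ε₂ := mul_le_mul_of_nonneg_left h3.le (abs_nonneg c)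
        have h2' : |c| * ε₂ ≤ ε / 3 := by
          rw [hε₂def, mul_div_assoc', div_le_div_iff₀ hc1 (by norm_num : (0:ℝ) < 3)]
          nlinarith [abs_nonneg c, hε.le]
        linarith
      have hda : |d| * |Y n ω - c| ≤ ε / 3 := by
        have : |d| * |Y n ω - c| ≤ |d| * ε₃ := mul_le_mul_of_nonneg_left h4.le (abs_nonneg d)
        have h2' : |d| * ε₃ ≤ ε / 3 := by
          rw [hε₃def, mul_div_assoc', div_le_div_iff₀ hd1 (by norm_num : (0:ℝ) < 3)]
          nlinarith [abs_nonneg d, hε.le]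
        linarith
      linarith
    have hm : μ {ω | ε ≤ |Y n ω * Z n ω - c * d|} ≤
        μ {ω | ε₁ ≤ |Y n ω - c|} + μ {ω | ε₁ ≤ |Z n ω - d|}
        + μ {ω | ε₂ ≤ |Z n ω - d|} + μ {ω | ε₃ ≤ |Y n ω - c|} := by
      calc μ {ω | ε ≤ |Y n ω * Z n ω - c * d|} ≤ μ _ := measure_mono hsub
        _ ≤ _ := by
          refine le_trans (measure_union_le _ _) ?_
          gcongr
          refine le_trans (measure_union_le _ _) ?_
          gcongr
          exact measure_union_le _ _
    have := ENNReal.toReal_mono (by finiteness) hm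
    rwa [ENNReal.toReal_add, ENNReal.toReal_add, ENNReal.toReal_add] at this <;>
      finiteness
  have H1 := hY ε₁ hε₁ (δ/4) (by linarith)
  have H2 := hZ ε₁ hε₁ (δ/4) (by linarith)
  have H3 := hZ ε₂ hε₂ (δ/4) (by linarith)
  have H4 := hY ε₃ hε₃ (δ/4) (by linarith)
  refine DNZero.mono hR (fun m n hA => ?_) (((H1.union hR H2).union hR H3).union hR H4)
  simp only at hA ⊢
  by_contra hcon
  push_neg at hcon
  obtain ⟨⟨⟨h1, h2⟩, h3⟩, h4⟩ := hcon
  have heg : 0 ≤ e (y m - n) * g n := mul_nonneg (he _) (hg _)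
  have := mul_le_mul_of_nonneg_left (key n) heg
  nlinarith
end

section
/- Let (x_m) and (y_m) be sequences of non-negative integers with x_m < y_m for all m and y_m → ∞, and let (e_m), (g_m) be sequences of non-negative reals with R_m = Σ_{v = x_m+1}^{y_m} e_v · g_{y_m − v} > 0 for all m. Let (Y_n) and (Z_n) be sequences of random variables on the same probability space, with each Z_n almost surely nonzero, and y, z ∈ ℝ constants with z ≠ 0. If (Y_n) is deferred Nörlund statistically convergent in probability to the constant y and (Z_n) is deferred Nörlund statistically convergent in probability to the constant z, then the sequence (Y_n / Z_n) is deferred Nörlund statistically convergent in probability to y/z. -/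
open MeasureTheory Filter

/-- If `(Y n)` is St_DNP-convergent to the constant `c`, `(Z n)` is
St_DNP-convergent to the constant `d ≠ 0`, and each `Z n` is a.s. nonzero, then
`(Y n / Z n)` is St_DNP-convergent to `c / d`. -/
theorem stmt_3 {Ω : Type*} [MeasurableSpace Ω] (μ : Measure Ω) [IsProbabilityMeasure μ]
    (x y : ℕ → ℕ) (e g : ℕ → ℝ)
    (hxy : ∀ m, x m < y m) (hy : Tendsto y atTop atTop)
    (he : ∀ m, 0 ≤ e m) (hg : ∀ m, 0 ≤ g m)
    (hR : ∀ m, 0 < Rm x y e g m)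
    (Y Z : ℕ → Ω → ℝ) (c d : ℝ) (hd : d ≠ 0)
    (hYmeas : ∀ n, Measurable (Y n)) (hZmeas : ∀ n, Measurable (Z n))
    (hZne : ∀ n, ∀ᵐ ω ∂μ, Z n ω ≠ 0)
    (hY : StDNP μ x y e g Y (fun _ => c))
    (hZ : StDNP μ x y e g Z (fun _ => d)) :
    StDNP μ x y e g (fun n ω => Y n ω / Z n ω) (fun _ => c / d) := by
  intro ε hε δ hδ
  have hd' : 0 < |d| := abs_pos.mpr hd
  set ε₁ : ℝ := ε * |d| / 4 with hε₁def
  set ε₂ : ℝ := min (|d| / 2) (ε * d ^ 2 / (4 * (|c| + 1))) with hε₂def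
  have hε₁ : 0 < ε₁ := by positivity
  have hε₂ : 0 < ε₂ := by
    apply lt_min (by positivity)
    have : 0 < |c| + 1 := by positivity
    positivity
  have hA := hY ε₁ hε₁ (δ / 2) (by positivity)
  have hB := hZ ε₂ hε₂ (δ / 2) (by positivity)
  -- arithmetic key lemma
  have arith : ∀ n ω, Z n ω ≠ 0 → |Y n ω - c| < ε₁ → |Z n ω - d| < ε₂ →
      |Y n ω / Z n ω - c / d| < ε := by
    intro n ω hZ0 h1 h2
    have h2a : |Z n ω - d| < |d| / 2 := lt_of_lt_of_le h2 (min_le_left _ _)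
    have h2b : |Z n ω - d| < ε * d ^ 2 / (4 * (|c| + 1)) :=
      lt_of_lt_of_le h2 (min_le_right _ _)
    have hZabs : |d| / 2 < |Z n ω| := by
      have := abs_sub_abs_le_abs_sub d (Z n ω)
      rw [abs_sub_comm] at this
      linarith
    rw [div_sub_div _ _ hZ0 hd, abs_div, abs_mul]
    rw [div_lt_iff₀ (by positivity)]
    have hnum : Y n ω * d - Z n ω * c = (Y n ω - c) * d - c * (Z n ω - d) := by ring
    have hb1 : |Y n ω * d - Z n ω * c| ≤ |Y n ω - c| * |d| + |c| * |Z n ω - d| := by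
      rw [hnum]
      calc |(Y n ω - c) * d - c * (Z n ω - d)|
          ≤ |(Y n ω - c) * d| + |c * (Z n ω - d)| := abs_sub _ _
        _ = |Y n ω - c| * |d| + |c| * |Z n ω - d| := by rw [abs_mul, abs_mul]
    have hc1 : 0 < |c| + 1 := by positivity
    have hcb : |c| * (ε * d ^ 2 / (4 * (|c| + 1))) ≤ ε * d ^ 2 / 4 := by
      rw [mul_div_assoc', div_le_div_iff₀ (by positivity) (by norm_num)]
      nlinarith [abs_nonneg c, sq_nonneg d, hε.le]
    have hsq : |d| * |d| = d ^ 2 := by rw [← abs_mul, abs_mul_self]; ring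
    rw [hε₁def] at h1
    nlinarith [mul_lt_mul_of_pos_right h1 hd',
      mul_le_mul_of_nonneg_left h2b.le (abs_nonneg c),
      mul_lt_mul_of_pos_left hZabs hε, hsq, hcb, hb1]
  -- measure inequality
  have hmeas : ∀ n,
      (μ {ω | ε ≤ |Y n ω / Z n ω - c / d|}).toReal ≤
        (μ {ω | ε₁ ≤ |Y n ω - c|}).toReal + (μ {ω | ε₂ ≤ |Z n ω - d|}).toReal := by
    intro n
    have hincl : {ω | ε ≤ |Y n ω / Z n ω - c / d|} ⊆
        ({ω | ε₁ ≤ |Y n ω - c|} ∪ {ω | ε₂ ≤ |Z n ω - d|}) ∪ {ω | Z n ω = 0} := by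
      intro ω hω
      by_contra hcon
      simp only [Set.mem_union, Set.mem_setOf_eq, not_or, not_le] at hcon
      exact absurd hω (not_le.mpr (arith n ω hcon.2 hcon.1.1 hcon.1.2))
    have hnull : μ {ω | Z n ω = 0} = 0 := by
      have := hZne n
      rw [ae_iff] at this
      simpa using this
    have hle : μ {ω | ε ≤ |Y n ω / Z n ω - c / d|} ≤
        μ {ω | ε₁ ≤ |Y n ω - c|} + μ {ω | ε₂ ≤ |Z n ω - d|} := by
      calc μ {ω | ε ≤ |Y n ω / Z n ω - c / d|}
          ≤ μ (({ω | ε₁ ≤ |Y n ω - c|} ∪ {ω | ε₂ ≤ |Z n ω - d|}) ∪ {ω | Z n ω = 0}) :=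
            measure_mono hincl
        _ ≤ μ ({ω | ε₁ ≤ |Y n ω - c|} ∪ {ω | ε₂ ≤ |Z n ω - d|}) + μ {ω | Z n ω = 0} :=
            measure_union_le _ _
        _ = μ ({ω | ε₁ ≤ |Y n ω - c|} ∪ {ω | ε₂ ≤ |Z n ω - d|}) := by rw [hnull, add_zero]
        _ ≤ _ := measure_union_le _ _
    calc (μ {ω | ε ≤ |Y n ω / Z n ω - c / d|}).toReal
        ≤ (μ {ω | ε₁ ≤ |Y n ω - c|} + μ {ω | ε₂ ≤ |Z n ω - d|}).toReal :=
          ENNReal.toReal_mono (by finiteness) hle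
      _ = _ := ENNReal.toReal_add (measure_ne_top _ _) (measure_ne_top _ _)
  -- implication on index sets
  have himp : ∀ m n,
      δ ≤ e (y m - n) * g n * (μ {ω | ε ≤ |Y n ω / Z n ω - c / d|}).toReal →
      (δ / 2 ≤ e (y m - n) * g n * (μ {ω | ε₁ ≤ |Y n ω - c|}).toReal) ∨
      (δ / 2 ≤ e (y m - n) * g n * (μ {ω | ε₂ ≤ |Z n ω - d|}).toReal) := by
    intro m n h
    by_contra hcon
    push_neg at hcon
    have heg : 0 ≤ e (y m - n) * g n := mul_nonneg (he _) (hg _)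
    have := mul_le_mul_of_nonneg_left (hmeas n) heg
    rw [mul_add] at this
    linarith [hcon.1, hcon.2]
  -- density argument
  have hfin : ∀ (m : ℕ) (P : ℕ → Prop),
      {n : ℕ | (n : ℝ) ≤ Rm x y e g m ∧ P n}.Finite := by
    intro m P
    apply Set.Finite.subset (Set.finite_Iic ⌊Rm x y e g m⌋₊)
    intro n hn
    exact Nat.le_floor hn.1
  have hcard : ∀ m,
      ((Nat.card {n : ℕ | (n : ℝ) ≤ Rm x y e g m ∧
          δ ≤ e (y m - n) * g n *
            (μ {ω | ε ≤ |(fun n ω => Y n ω / Z n ω) n ω - (fun _ => c / d) ω|}).toReal} : ℕ) : ℝ) ≤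
      (Nat.card {n : ℕ | (n : ℝ) ≤ Rm x y e g m ∧
          δ / 2 ≤ e (y m - n) * g n * (μ {ω | ε₁ ≤ |Y n ω - (fun _ => c) ω|}).toReal} : ℕ) +
      (Nat.card {n : ℕ | (n : ℝ) ≤ Rm x y e g m ∧
          δ / 2 ≤ e (y m - n) * g n * (μ {ω | ε₂ ≤ |Z n ω - (fun _ => d) ω|}).toReal} : ℕ) := by
    intro m
    simp only [Nat.card_coe_set_eq]
    push_cast
    have hsub : {n : ℕ | (n : ℝ) ≤ Rm x y e g m ∧
          δ ≤ e (y m - n) * g n *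
            (μ {ω | ε ≤ |(fun n ω => Y n ω / Z n ω) n ω - (fun _ => c / d) ω|}).toReal} ⊆
        {n : ℕ | (n : ℝ) ≤ Rm x y e g m ∧
          δ / 2 ≤ e (y m - n) * g n * (μ {ω | ε₁ ≤ |Y n ω - (fun _ => c) ω|}).toReal} ∪
        {n : ℕ | (n : ℝ) ≤ Rm x y e g m ∧
          δ / 2 ≤ e (y m - n) * g n * (μ {ω | ε₂ ≤ |Z n ω - (fun _ => d) ω|}).toReal} := by
      intro n hn
      rcases himp m n hn.2 with h | h
      · exact Or.inl ⟨hn.1, h⟩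
      · exact Or.inr ⟨hn.1, h⟩
    calc (({n : ℕ | (n : ℝ) ≤ Rm x y e g m ∧
          δ ≤ e (y m - n) * g n *
            (μ {ω | ε ≤ |(fun n ω => Y n ω / Z n ω) n ω - (fun _ => c / d) ω|}).toReal}).ncard : ℝ)
        ≤ (({n : ℕ | (n : ℝ) ≤ Rm x y e g m ∧
            δ / 2 ≤ e (y m - n) * g n * (μ {ω | ε₁ ≤ |Y n ω - (fun _ => c) ω|}).toReal} ∪
          {n : ℕ | (n : ℝ) ≤ Rm x y e g m ∧
            δ / 2 ≤ e (y m - n) * g n * (μ {ω | ε₂ ≤ |Z n ω - (fun _ => d) ω|}).toReal}).ncard : ℝ) := by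
          exact_mod_cast Set.ncard_le_ncard hsub ((hfin m _).union (hfin m _))
      _ ≤ _ := by exact_mod_cast Set.ncard_union_le _ _
  unfold DNZero
  have hsum := hA.add hB
  rw [add_zero] at hsum
  refine tendsto_of_tendsto_of_tendsto_of_le_of_le (tendsto_const_nhds (x := (0:ℝ))) hsum
    (fun m => div_nonneg (Nat.cast_nonneg _) (hR m).le) (fun m => ?_)
  rw [← add_div]
  gcongr
  · exact (hR m).le
  · exact hcard m
end

section
/- Let (x_m) and (y_m) be sequences of non-negative integers with x_m < y_m for all m and y_m → ∞, and let (e_m), (g_m) be sequences of non-negative reals with R_m = Σ_{v = x_m+1}^{y_m} e_v · g_{y_m − v} > 0 for all m. Let r ≥ 1 and let (Y_n) be a sequence of random variables and Y a random variable on the same probability space with E(|Y_n − Y|^r) finite for all n. If (Y_n) is deferred Nörlund statistically r-th mean convergent to Y, then (Y_n) is deferred Nörlund statistically convergent in probability to Y. -/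
open MeasureTheory Filter

/-- Deferred Nörlund statistical `r`-th mean convergence of `(Y n)` to `Z`. -/
def StDNM {Ω : Type*} [MeasurableSpace Ω] (μ : Measure Ω)
    (x y : ℕ → ℕ) (e g : ℕ → ℝ) (Y : ℕ → Ω → ℝ) (Z : Ω → ℝ) (r : ℝ) : Prop :=
  ∀ ε > (0 : ℝ),
    DNZero x y e g
      (fun m n => ε ≤ e (y m - n) * g n * ∫ ω, |Y n ω - Z ω| ^ r ∂μ)

/-- For `r ≥ 1`, deferred Nörlund statistical `r`-th mean convergence
implies deferred Nörlund statistical convergence in probability. -/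
theorem stmt_7 {Ω : Type*} [MeasurableSpace Ω] (μ : Measure Ω) [IsProbabilityMeasure μ]
    (x y : ℕ → ℕ) (e g : ℕ → ℝ)
    (hxy : ∀ m, x m < y m) (hy : Tendsto y atTop atTop)
    (he : ∀ m, 0 ≤ e m) (hg : ∀ m, 0 ≤ g m)
    (hR : ∀ m, 0 < Rm x y e g m)
    (r : ℝ) (hr : 1 ≤ r)
    (Y : ℕ → Ω → ℝ) (V : Ω → ℝ)
    (hYmeas : ∀ n, Measurable (Y n)) (hVmeas : Measurable V)
    (hInt : ∀ n, Integrable (fun ω => |Y n ω - V ω| ^ r) μ)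
    (hM : StDNM μ x y e g Y V r) :
    StDNP μ x y e g Y V := by
  intro ε hε δ hδ
  have hr0 : (0:ℝ) < r := lt_of_lt_of_le one_pos hr
  have hεr : (0:ℝ) < ε ^ r := Real.rpow_pos_of_pos hε r
  have key := hM (δ * ε ^ r) (by positivity)
  unfold DNZero at key ⊢
  have hsub : ∀ m,
      {n : ℕ | (n : ℝ) ≤ Rm x y e g m ∧
        δ ≤ e (y m - n) * g n * (μ {ω | ε ≤ |Y n ω - V ω|}).toReal} ⊆
      {n : ℕ | (n : ℝ) ≤ Rm x y e g m ∧
        δ * ε ^ r ≤ e (y m - n) * g n * ∫ ω, |Y n ω - V ω| ^ r ∂μ} := by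
    intro m n hn
    obtain ⟨h1, h2⟩ := hn
    refine ⟨h1, ?_⟩
    have hset : {ω | ε ≤ |Y n ω - V ω|} = {ω | ε ^ r ≤ |Y n ω - V ω| ^ r} := by
      ext ω
      simp only [Set.mem_setOf_eq]
      constructor
      · exact fun h => Real.rpow_le_rpow hε.le h hr0.le
      · intro h
        by_contra hc
        exact absurd h (not_le.2 (Real.rpow_lt_rpow (abs_nonneg _) (not_le.1 hc) hr0))
    have hmarkov : ε ^ r * (μ {ω | ε ≤ |Y n ω - V ω|}).toReal ≤
        ∫ ω, |Y n ω - V ω| ^ r ∂μ := by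
      rw [hset]
      exact mul_meas_ge_le_integral_of_nonneg
        (Eventually.of_forall fun ω => Real.rpow_nonneg (abs_nonneg _) r) (hInt n) _
    have heg : 0 ≤ e (y m - n) * g n := mul_nonneg (he _) (hg _)
    calc δ * ε ^ r ≤ (e (y m - n) * g n * (μ {ω | ε ≤ |Y n ω - V ω|}).toReal) * ε ^ r :=
          mul_le_mul_of_nonneg_right h2 hεr.le
      _ = e (y m - n) * g n * (ε ^ r * (μ {ω | ε ≤ |Y n ω - V ω|}).toReal) := by ring
      _ ≤ e (y m - n) * g n * ∫ ω, |Y n ω - V ω| ^ r ∂μ :=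
          mul_le_mul_of_nonneg_left hmarkov heg
  have hfin : ∀ m, {n : ℕ | (n : ℝ) ≤ Rm x y e g m ∧
      δ * ε ^ r ≤ e (y m - n) * g n * ∫ ω, |Y n ω - V ω| ^ r ∂μ}.Finite := by
    intro m
    apply Set.Finite.subset (Set.finite_Iic ⌊Rm x y e g m⌋₊)
    intro n hn
    exact Set.mem_Iic.2 (Nat.le_floor hn.1)
  refine squeeze_zero (fun m => ?_) (fun m => ?_) key
  · exact div_nonneg (Nat.cast_nonneg _) (hR m).le
  · have hcard : Nat.card {n : ℕ | (n : ℝ) ≤ Rm x y e g m ∧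
        δ ≤ e (y m - n) * g n * (μ {ω | ε ≤ |Y n ω - V ω|}).toReal} ≤
        Nat.card {n : ℕ | (n : ℝ) ≤ Rm x y e g m ∧
        δ * ε ^ r ≤ e (y m - n) * g n * ∫ ω, |Y n ω - V ω| ^ r ∂μ} :=
      Nat.card_mono (hfin m) (hsub m)
    have := hR m
    gcongr
end

section
/- There exist sequences (x_m), (y_m) of non-negative integers with x_m < y_m for all m and y_m → ∞, sequences (e_m), (g_m) of non-negative reals with R_m = Σ_{v = x_m+1}^{y_m} e_v · g_{y_m − v} > 0 for all m, a probability space, and a sequence of random variables (Y_n) on it, such that (Y_n) is deferred Nörlund statistically convergent in probability to 0 but, for every r ≥ 1, (Y_n) is not deferred Nörlund statistically r-th mean convergent to 0. In particular one may take Y_n taking the value n with probability 1/√n and the value 0 with probability 1 − 1/√n (for n ≥ 1). -/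
open MeasureTheory Filter

/-! ### Auxiliary material for the construction -/

/-- The random variables: `Yaux n` takes value `n` on `[0, 1/√n)` and `0` elsewhere. -/
noncomputable def Yaux : ℕ → ℝ → ℝ := fun n ω => if ω < 1 / Real.sqrt n then (n : ℝ) else 0

/-- The uniform probability measure on `[0,1]`. -/
noncomputable def μaux : Measure ℝ := volume.restrict (Set.Icc (0:ℝ) 1)

lemma μaux_Iio {c : ℝ} (hc0 : 0 ≤ c) (hc1 : c ≤ 1) :
    μaux (Set.Iio c) = ENNReal.ofReal c := by
  rw [μaux, Measure.restrict_apply measurableSet_Iio]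
  have h : Set.Iio c ∩ Set.Icc (0:ℝ) 1 = Set.Ico 0 c := by
    ext x
    simp only [Set.mem_inter_iff, Set.mem_Iio, Set.mem_Icc, Set.mem_Ico]
    constructor
    · rintro ⟨h1, h2, _⟩; exact ⟨h2, h1⟩
    · rintro ⟨h1, h2⟩; exact ⟨h2, h1, le_trans (le_of_lt h2) hc1⟩
  rw [h, Real.volume_Ico]; simp

lemma μaux_Ici {c : ℝ} (hc0 : 0 ≤ c) :
    μaux (Set.Ici c) = ENNReal.ofReal (1 - c) := by
  rw [μaux, Measure.restrict_apply measurableSet_Ici]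
  have h : Set.Ici c ∩ Set.Icc (0:ℝ) 1 = Set.Icc c 1 := by
    ext x
    simp only [Set.mem_inter_iff, Set.mem_Ici, Set.mem_Icc]
    constructor
    · rintro ⟨h1, _, h3⟩; exact ⟨h1, h3⟩
    · rintro ⟨h1, h2⟩; exact ⟨h1, le_trans hc0 h1, h2⟩
  rw [h, Real.volume_Icc]

lemma sqrt_inv_le_one {n : ℕ} (hn : 1 ≤ n) : 1 / Real.sqrt n ≤ 1 := by
  rw [div_le_one (by positivity)]
  exact Real.one_le_sqrt.mpr (by exact_mod_cast hn)

lemma Yaux_integral {n : ℕ} (hn : 1 ≤ n) {r : ℝ} (hr : 1 ≤ r) :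
    ∫ ω, |Yaux n ω - 0| ^ r ∂μaux = (1 / Real.sqrt n) * (n : ℝ) ^ r := by
  set c := 1 / Real.sqrt n with hc
  have hc0 : 0 ≤ c := by positivity
  have hfun : (fun ω => |Yaux n ω - 0| ^ r)
      = Set.indicator (Set.Iio c) (fun _ => (n:ℝ) ^ r) := by
    funext ω
    by_cases h : ω < c
    · simp [Yaux, h, Set.indicator_of_mem,
        abs_of_nonneg (show (0:ℝ) ≤ (n:ℝ) by positivity), ← hc]
    · simp only [Yaux, ← hc, if_neg h, sub_zero, abs_zero,
        Set.indicator_of_notMem (by simpa using h : ω ∉ Set.Iio c)]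
      exact Real.zero_rpow (by linarith)
  rw [hfun, integral_indicator_const _ measurableSet_Iio, measureReal_def,
    μaux_Iio hc0 (sqrt_inv_le_one hn), ENNReal.toReal_ofReal hc0, smul_eq_mul]

lemma card_le_aux (s : Set ℕ) (N : ℕ) (h : s ⊆ Set.Iic N) : (Nat.card s : ℝ) ≤ N + 1 := by
  have h2 := Nat.card_mono (Set.finite_Iic N) h
  rw [Nat.card_coe_set_eq (Set.Iic N), ← Finset.coe_Iic, Set.ncard_coe_finset,
    Nat.card_Iic] at h2
  exact_mod_cast h2

lemma le_card_aux (s : Set ℕ) (m : ℕ) (h : ∀ n, 1 ≤ n → n ≤ m + 1 → n ∈ s) (hf : s.Finite) :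
    ((m:ℝ) + 1) ≤ Nat.card s := by
  have hsub : Set.Icc 1 (m+1) ⊆ s := fun n hn => h n hn.1 hn.2
  have h2 := Nat.card_mono hf hsub
  rw [Nat.card_coe_set_eq (Set.Icc 1 (m+1)), ← Finset.coe_Icc, Set.ncard_coe_finset,
    Nat.card_Icc] at h2
  have h3 : m + 1 ≤ Nat.card ↑s := by omega
  exact_mod_cast h3

lemma tendsto_div_succ (C : ℝ) : Tendsto (fun m : ℕ => C / ((m:ℝ)+1)) atTop (nhds 0) := by
  have h := (tendsto_const_div_atTop_nhds_zero_nat (C := C)).comp (tendsto_add_atTop_nat 1)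
  refine h.congr (fun m => ?_)
  simp [Function.comp]

lemma Rm_eq (m : ℕ) :
    Rm (fun _ => 0) (fun m => m + 1) (fun _ => 1) (fun _ => 1) m = (m : ℝ) + 1 := by
  simp [Rm, Finset.sum_const, Nat.card_Ioc]

/-- There are deferred Nörlund data and a sequence of random variables,
with `Y n` taking the value `n` with probability `1/√n` and the value `0` with probability
`1 − 1/√n` (for `n ≥ 1`), which is St_DNP-convergent to `0` but, for every `r ≥ 1`, is not
St_DNM-convergent to `0`. -/
theorem stmt_9 :
    ∃ (x y : ℕ → ℕ) (e g : ℕ → ℝ),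
      (∀ m, x m < y m) ∧ Tendsto y atTop atTop ∧
      (∀ m, 0 ≤ e m) ∧ (∀ m, 0 ≤ g m) ∧
      (∀ m, 0 < Rm x y e g m) ∧
      ∃ (Ω : Type) (_ : MeasurableSpace Ω) (μ : Measure Ω) (Y : ℕ → Ω → ℝ),
        IsProbabilityMeasure μ ∧ (∀ n, Measurable (Y n)) ∧
        (∀ n, 1 ≤ n →
          (∀ ω, Y n ω = n ∨ Y n ω = 0) ∧
          μ {ω | Y n ω = n} = ENNReal.ofReal (1 / Real.sqrt n) ∧
          μ {ω | Y n ω = 0} = ENNReal.ofReal (1 - 1 / Real.sqrt n)) ∧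
        StDNP μ x y e g Y (fun _ => 0) ∧
        (∀ r : ℝ, 1 ≤ r → ¬ StDNM μ x y e g Y (fun _ => 0) r) := by
  refine ⟨fun _ => 0, fun m => m + 1, fun _ => 1, fun _ => 1,
    fun m => Nat.succ_pos m, (tendsto_add_atTop_nat 1).comp tendsto_id |>.congr (by simp),
    fun _ => zero_le_one, fun _ => zero_le_one, ?_, ℝ, inferInstance, μaux, Yaux, ?_⟩
  · intro m; rw [Rm_eq]; positivity
  · refine ⟨?_, ?_, ?_, ?_, ?_⟩
    · constructor
      rw [μaux, Measure.restrict_apply_univ, Real.volume_Icc]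
      norm_num
    · intro n
      exact Measurable.ite measurableSet_Iio measurable_const measurable_const
    · intro n hn
      have hc0 : (0:ℝ) ≤ 1 / Real.sqrt n := by positivity
      have hcpos : (0:ℝ) < 1 / Real.sqrt n := by
        have : (0:ℝ) < Real.sqrt n := Real.sqrt_pos.mpr (by exact_mod_cast hn)
        positivity
      have hne : ((n:ℝ)) ≠ 0 := by positivity
      refine ⟨fun ω => ?_, ?_, ?_⟩
      · by_cases h : ω < 1 / Real.sqrt n
        · left; simp only [Yaux, if_pos h]
        · right; simp only [Yaux, if_neg h]
      · have hset : {ω | Yaux n ω = n} = Set.Iio (1 / Real.sqrt n) := by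
          ext ω
          simp only [Set.mem_setOf_eq, Set.mem_Iio, Yaux]
          split_ifs with h
          · exact iff_of_true rfl h
          · exact iff_of_false (fun e => hne e.symm) h
        rw [hset, μaux_Iio hc0 (sqrt_inv_le_one hn)]
      · have hset : {ω | Yaux n ω = 0} = Set.Ici (1 / Real.sqrt n) := by
          ext ω
          simp only [Set.mem_setOf_eq, Set.mem_Ici, Yaux]
          split_ifs with h
          · exact iff_of_false hne (not_le.mpr h)
          · exact iff_of_true rfl (not_lt.mp h)
        rw [hset, μaux_Ici hc0]
    · -- StDNP
      intro ε hε δ hδ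
      unfold DNZero
      set N := ⌈δ⁻¹ * δ⁻¹⌉₊ with hN
      have hsub : ∀ m : ℕ, {n : ℕ | (n : ℝ) ≤ (m:ℝ) + 1 ∧
            δ ≤ (1:ℝ) * 1 * (μaux {ω | ε ≤ |Yaux n ω - 0|}).toReal} ⊆ Set.Iic N := by
        intro m n hn
        obtain ⟨-, hn2⟩ := hn
        rcases Nat.eq_zero_or_pos n with h0 | h1
        · simp [h0]
        -- n ≥ 1
        have hsq : (0:ℝ) < Real.sqrt n := Real.sqrt_pos.mpr (by exact_mod_cast h1)
        have hle : μaux {ω | ε ≤ |Yaux n ω - 0|} ≤ ENNReal.ofReal (1 / Real.sqrt n) := by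
          rw [← μaux_Iio (by positivity) (sqrt_inv_le_one h1)]
          apply measure_mono
          intro ω hω
          simp only [Set.mem_setOf_eq, sub_zero] at hω
          simp only [Set.mem_Iio]
          by_contra h
          rw [Yaux] at hω
          rw [if_neg h] at hω
          simp at hω
          linarith
        have htr : (μaux {ω | ε ≤ |Yaux n ω - 0|}).toReal ≤ 1 / Real.sqrt n := by
          have h2 := ENNReal.toReal_mono ENNReal.ofReal_ne_top hle
          rwa [ENNReal.toReal_ofReal (by positivity)] at h2
        have hδn : δ ≤ 1 / Real.sqrt n := by
          rw [one_mul, one_mul] at hn2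
          linarith
        have hs : Real.sqrt n ≤ δ⁻¹ := by
          rw [le_div_iff₀ hsq] at hδn
          rw [inv_eq_one_div, le_div_iff₀ hδ]
          linarith [mul_comm δ (Real.sqrt n)]
        have hnle : (n : ℝ) ≤ δ⁻¹ * δ⁻¹ := by
          have he : (n:ℝ) = Real.sqrt n * Real.sqrt n :=
            (Real.mul_self_sqrt (by positivity : (0:ℝ) ≤ (n:ℝ))).symm
          rw [he]
          exact mul_le_mul hs hs (le_of_lt hsq) (by positivity)
        have : (n:ℝ) ≤ (N:ℝ) := le_trans hnle (Nat.le_ceil _)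
        exact_mod_cast this
      apply squeeze_zero (fun m => ?_) (fun m => ?_) (tendsto_div_succ ((N:ℝ)+1))
      · refine div_nonneg (Nat.cast_nonneg _) ?_
        rw [Rm_eq]; positivity
      · rw [Rm_eq]
        exact (div_le_div_iff_of_pos_right (by positivity : (0:ℝ) < (m:ℝ)+1)).mpr
          (card_le_aux _ N (hsub m))
    · -- not StDNM
      intro r hr h
      have h1 := h 1 one_pos
      unfold DNZero at h1
      obtain ⟨m, hm⟩ := (h1.eventually (eventually_lt_nhds one_pos)).exists
      simp only [Rm_eq, one_mul] at hm
      apply absurd hm (not_lt.mpr ?_)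
      rw [le_div_iff₀ (by positivity), one_mul]
      have hfin : {n : ℕ | (n:ℝ) ≤ (m:ℝ) + 1 ∧
          (1:ℝ) ≤ ∫ ω, |Yaux n ω - 0| ^ r ∂μaux}.Finite := by
        apply Set.Finite.subset (Set.finite_Iic (m+1))
        intro n hn
        have := hn.1
        have : (n:ℝ) ≤ ((m+1 : ℕ) : ℝ) := by push_cast; linarith
        exact_mod_cast this
      apply le_card_aux _ m ?_ hfin
      intro n hn1 hn2
      constructor
      · push_cast
        have : (n:ℝ) ≤ ((m+1 : ℕ) : ℝ) := by exact_mod_cast hn2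
        push_cast at this
        linarith
      · rw [Yaux_integral hn1 hr]
        have hn1' : (1:ℝ) ≤ (n:ℝ) := by exact_mod_cast hn1
        have h2 : (n:ℝ) ≤ (n:ℝ) ^ r := by
          have := Real.rpow_le_rpow_of_exponent_le hn1' hr
          rwa [Real.rpow_one] at this
        calc (1:ℝ) ≤ Real.sqrt n := Real.one_le_sqrt.mpr hn1'
          _ = (n:ℝ) / Real.sqrt n := (Real.div_sqrt).symm
          _ = (1 / Real.sqrt n) * n := by ring
          _ ≤ (1 / Real.sqrt n) * (n:ℝ) ^ r := by
              apply mul_le_mul_of_nonneg_left h2 (by positivity)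
end

section
/- There exist sequences (x_m), (y_m) of non-negative integers with x_m < y_m for all m and y_m → ∞, sequences (e_m), (g_m) of non-negative reals with R_m = Σ_{v = x_m+1}^{y_m} e_v · g_{y_m − v} > 0 for all m, a probability space, a sequence of random variables (Y_n) on it, and a random variable Y on the same space, such that (Y_n) is deferred Nörlund statistically distribution convergent to Y but (Y_n) is not deferred Nörlund statistically convergent in probability to Y. In particular one may take each Y_n and Y to be {0,1}-valued with P(Y_n = 1, Y = 0) = P(Y_n = 0, Y = 1) = 1/2 and P(Y_n = 0, Y = 0) = P(Y_n = 1, Y = 1) = 0. -/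
open MeasureTheory Filter

/-- Deferred Nörlund statistical distribution convergence of `(Y n)` to `Z`. -/
def StDNDC {Ω : Type*} [MeasurableSpace Ω] (μ : Measure Ω)
    (x y : ℕ → ℕ) (e g : ℕ → ℝ) (Y : ℕ → Ω → ℝ) (Z : Ω → ℝ) : Prop :=
  ∀ t : ℝ, ContinuousAt (fun s => (μ {ω | Z ω ≤ s}).toReal) t →
    ∀ ε > (0 : ℝ),
      DNZero x y e g
        (fun m n =>
          ε ≤ e (y m - n) * g n *
            |(μ {ω | Y n ω ≤ t}).toReal - (μ {ω | Z ω ≤ t}).toReal|)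

noncomputable def myMu : Measure Bool :=
  (1/2 : ENNReal) • Measure.dirac true + (1/2 : ENNReal) • Measure.dirac false

lemma myMu_apply (S : Set Bool) :
    myMu S = (1/2) * S.indicator 1 true + (1/2) * S.indicator 1 false := by
  simp [myMu, Measure.dirac_apply]

lemma DNZero_of_not {x y : ℕ → ℕ} {e g : ℕ → ℝ} {A : ℕ → ℕ → Prop}
    (h : ∀ m n, ¬ A m n) : DNZero x y e g A := by
  have he : ∀ m, {n : ℕ | (n : ℝ) ≤ Rm x y e g m ∧ A m n} = ∅ := by
    intro m; ext n; simp [h m n]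
  simp only [DNZero, he, Nat.card_eq_fintype_card, Set.isEmpty_coe_sort]
  simpa using tendsto_const_nhds

lemma Rm_one (m : ℕ) : Rm (fun m => m) (fun m => m + 1) (fun _ => 1) (fun _ => 1) m = 1 := by
  simp [Rm]

set_option maxHeartbeats 1000000 in
/-- There are deferred Nörlund data, a probability space, and `{0,1}`-valued
random variables `(Y n)` and `Z` with `P(Y n = 1, Z = 0) = P(Y n = 0, Z = 1) = 1/2` and
`P(Y n = 0, Z = 0) = P(Y n = 1, Z = 1) = 0`, such that `(Y n)` is St_DNDC-convergent to `Z`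
but not St_DNP-convergent to `Z`. -/
theorem stmt_10 :
    ∃ (x y : ℕ → ℕ) (e g : ℕ → ℝ),
      (∀ m, x m < y m) ∧ Tendsto y atTop atTop ∧
      (∀ m, 0 ≤ e m) ∧ (∀ m, 0 ≤ g m) ∧
      (∀ m, 0 < Rm x y e g m) ∧
      ∃ (Ω : Type) (_ : MeasurableSpace Ω) (μ : Measure Ω) (Y : ℕ → Ω → ℝ) (Z : Ω → ℝ),
        IsProbabilityMeasure μ ∧ (∀ n, Measurable (Y n)) ∧ Measurable Z ∧
        (∀ n ω, Y n ω = 0 ∨ Y n ω = 1) ∧ (∀ ω, Z ω = 0 ∨ Z ω = 1) ∧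
        (∀ n,
          μ {ω | Y n ω = 1 ∧ Z ω = 0} = 1/2 ∧
          μ {ω | Y n ω = 0 ∧ Z ω = 1} = 1/2 ∧
          μ {ω | Y n ω = 0 ∧ Z ω = 0} = 0 ∧
          μ {ω | Y n ω = 1 ∧ Z ω = 1} = 0) ∧
        StDNDC μ x y e g Y Z ∧
        ¬ StDNP μ x y e g Y Z := by
  refine ⟨fun m => m, fun m => m + 1, fun _ => 1, fun _ => 1,
    fun m => Nat.lt_succ_self m, ?_,
    fun _ => zero_le_one, fun _ => zero_le_one,
    ?_, Bool, inferInstance, myMu,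
    fun n ω => if ω then 0 else 1, fun ω => if ω then 1 else 0,
    ?_, ?_, ?_, ?_, ?_, ?_, ?_, ?_⟩
  · exact tendsto_add_atTop_nat 1
  · intro m; rw [Rm_one]; exact one_pos
  · constructor
    rw [myMu_apply]
    simp [ENNReal.inv_two_add_inv_two]
  · intro n; exact measurable_of_countable _
  · exact measurable_of_countable _
  · intro n ω; cases ω <;> simp
  · intro ω; cases ω <;> simp
  · intro n
    have h1 : {ω : Bool | (if ω then (0:ℝ) else 1) = 1 ∧ (if ω then (1:ℝ) else 0) = 0} = {false} := by
      ext ω; cases ω <;> simp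
    have h2 : {ω : Bool | (if ω then (0:ℝ) else 1) = 0 ∧ (if ω then (1:ℝ) else 0) = 1} = {true} := by
      ext ω; cases ω <;> simp
    have h3 : {ω : Bool | (if ω then (0:ℝ) else 1) = 0 ∧ (if ω then (1:ℝ) else 0) = 0} = ∅ := by
      ext ω; cases ω <;> simp
    have h4 : {ω : Bool | (if ω then (0:ℝ) else 1) = 1 ∧ (if ω then (1:ℝ) else 0) = 1} = ∅ := by
      ext ω; cases ω <;> simp
    refine ⟨?_, ?_, ?_, ?_⟩
    · rw [h1, myMu_apply]; simp
    · rw [h2, myMu_apply]; simp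
    · rw [h3, myMu_apply]; simp
    · rw [h4, myMu_apply]; simp
  · -- StDNDC
    intro t _ ε hε
    have hdist : (myMu {ω | (if ω then (0:ℝ) else 1) ≤ t}) =
        (myMu {ω | (if ω then (1:ℝ) else 0) ≤ t}) := by
      rw [myMu_apply, myMu_apply]
      by_cases h0 : (0:ℝ) ≤ t <;> by_cases h1 : (1:ℝ) ≤ t <;>
        simp [Set.indicator_apply, h0, h1] <;> ring
    apply DNZero_of_not
    intro m n
    simp only [not_le]
    calc (1:ℝ) * 1 * |(myMu {ω | (if ω then (0:ℝ) else 1) ≤ t}).toReal -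
          (myMu {ω | (if ω then (1:ℝ) else 0) ≤ t}).toReal| = 0 := by
          rw [hdist]; simp
      _ < ε := hε
  · -- ¬ StDNP
    intro h
    have key := h 1 one_pos 1 one_pos
    have huniv : {ω : Bool | (1:ℝ) ≤ |(if ω then (0:ℝ) else 1) - (if ω then (1:ℝ) else 0)|}
        = Set.univ := by
      ext ω; cases ω <;> simp
    have hmuniv : myMu Set.univ = 1 := by
      rw [myMu_apply]; simp [ENNReal.inv_two_add_inv_two]
    have hset : ∀ m : ℕ, {n : ℕ | (n : ℝ) ≤ Rm (fun m => m) (fun m => m + 1)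
        (fun _ => 1) (fun _ => 1) m ∧
        (1:ℝ) ≤ (1:ℝ) * 1 * (myMu {ω | (1:ℝ) ≤ |(if ω then (0:ℝ) else 1) -
          (if ω then (1:ℝ) else 0)|}).toReal} = {0, 1} := by
      intro m
      ext n
      simp only [Set.mem_setOf_eq, huniv, hmuniv, Rm_one, Set.mem_insert_iff,
        Set.mem_singleton_iff]
      constructor
      · rintro ⟨hn, -⟩
        have : n ≤ 1 := by exact_mod_cast hn
        omega
      · rintro (rfl | rfl) <;> norm_num
    have key2 : Tendsto (fun m => (Nat.card {n : ℕ | (n : ℝ) ≤ Rm (fun m => m) (fun m => m + 1)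
        (fun _ => 1) (fun _ => 1) m ∧
        (1:ℝ) ≤ (1:ℝ) * 1 * (myMu {ω | (1:ℝ) ≤ |(if ω then (0:ℝ) else 1) -
          (if ω then (1:ℝ) else 0)|}).toReal} : ℝ) /
        Rm (fun m => m) (fun m => m + 1) (fun _ => 1) (fun _ => 1) m)
        atTop (nhds 0) := key
    have hfun : (fun m => (Nat.card {n : ℕ | (n : ℝ) ≤ Rm (fun m => m) (fun m => m + 1)
        (fun _ => 1) (fun _ => 1) m ∧
        (1:ℝ) ≤ (1:ℝ) * 1 * (myMu {ω | (1:ℝ) ≤ |(if ω then (0:ℝ) else 1) -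
          (if ω then (1:ℝ) else 0)|}).toReal} : ℝ) /
        Rm (fun m => m) (fun m => m + 1) (fun _ => 1) (fun _ => 1) m)
        = fun _ => (2:ℝ) := by
      funext m
      rw [hset m, Nat.card_coe_set_eq, Set.ncard_pair (by norm_num : (0:ℕ) ≠ 1), Rm_one]
      norm_num
    rw [hfun] at key2
    have : (2:ℝ) = 0 := tendsto_nhds_unique tendsto_const_nhds key2
    norm_num at this
end
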